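/- Fix γ > 0 and assume: (kernel regularity) k_θ(x|z) + ‖∇_{(θ,x,z)} k_θ(x|z)‖ ≤ B_k and ‖∇_x k_θ(x|z) − ∇_x k_{θ'}(x'|z')‖ ≤ K_k ‖(θ, x, z) − (θ', x', z')‖; (reparameterization regularity) there exist a_φ ≥ 0, b_φ > 0 with ‖∇_{(θ,z)} φ_θ(z, ε)‖_F ≤ a_φ‖ε‖ + b_φ for all (θ, z, ε). Define s^γ_{θ,r}(z, ε) := ∇_x log(q_{θ,r}(x) + γ) evaluated at x = φ_θ(z, ε), where q_{θ,r}(x) := ∫ k_θ(x|z) r(dz). Then there exist constants a_s, b_s > 0 such that for all θ, θ', z, z', ε and all probability measures r, r' with finite first moment: ‖s^γ_{θ,r}(z, ε) − s^γ_{θ',r'}(z', ε)‖ ≤ (a_s‖ε‖ + b_s)(‖(θ, z) − (θ', z')‖ + W₁(r, r')). -/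

import Mathlib

open MeasureTheory Filter Topology
open scoped ENNReal NNReal

/-- Shorthand for Euclidean space `ℝ^n`. -/
abbrev Esp (n : ℕ) : Type := EuclideanSpace ℝ (Fin n)

/-- The Wasserstein-1 cost between two measures: the infimum over couplings `π` (measures on the
product with the given marginals) of `∫ ‖z − z'‖ dπ(z, z')`. -/
noncomputable def W1 {E : Type*} [MeasurableSpace E] [NormedAddCommGroup E]
    (r r' : Measure E) : ℝ≥0∞ :=
  ⨅ π : {π : Measure (E × E) // π.map Prod.fst = r ∧ π.map Prod.snd = r'},
    ∫⁻ p, (‖p.1 - p.2‖₊ : ℝ≥0∞) ∂π.1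

/-- The semi-implicit density `q_{θ,r}(x) = ∫ k_θ(x|z) r(dz)`. -/
noncomputable def qdens {dθ dx dz : ℕ} (k : Esp dθ → Esp dx → Esp dz → ℝ)
    (θ : Esp dθ) (r : Measure (Esp dz)) (x : Esp dx) : ℝ :=
  ∫ z, k θ x z ∂r

/-- The `γ`-regularized score `s^γ_{θ,r}(z, ε) = ∇_x log(q_{θ,r}(x) + γ)` at `x = φ_θ(z, ε)`. -/
noncomputable def sGamma {dθ dx dz : ℕ} (γ : ℝ) (k : Esp dθ → Esp dx → Esp dz → ℝ)
    (φ : Esp dθ → Esp dz → Esp dx → Esp dx)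
    (θ : Esp dθ) (r : Measure (Esp dz)) (z : Esp dz) (ε : Esp dx) : Esp dx :=
  gradient (fun x => Real.log (qdens k θ r x + γ)) (φ θ z ε)

section Aux
open InnerProductSpace
variable {dθ dx dz : ℕ}

lemma prod3_norm (θ θ' : Esp dθ) (x x' : Esp dx) (z z' : Esp dz) :
    ‖((θ, x, z) : Esp dθ × Esp dx × Esp dz) - (θ', x', z')‖
      = max ‖θ - θ'‖ (max ‖x - x'‖ ‖z - z'‖) := by
  simp [Prod.norm_def, Prod.mk_sub_mk]

lemma prod3_norm_same_z (θ θ' : Esp dθ) (x x' : Esp dx) (z : Esp dz) :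
    ‖((θ, x, z) : Esp dθ × Esp dx × Esp dz) - (θ', x', z)‖
      = ‖((θ, x) : Esp dθ × Esp dx) - (θ', x')‖ := by
  rw [prod3_norm]
  simp [Prod.norm_def, Prod.mk_sub_mk, max_eq_left (norm_nonneg _)]

lemma prod3_norm_same_θx (θ : Esp dθ) (x : Esp dx) (z z' : Esp dz) :
    ‖((θ, x, z) : Esp dθ × Esp dx × Esp dz) - (θ, x, z')‖ = ‖z - z'‖ := by
  rw [prod3_norm]
  simp [max_eq_right (norm_nonneg _)]

-- marginal lintegral for couplings
lemma coupling_lintegral_fst {r : Measure (Esp dz)} (π : Measure (Esp dz × Esp dz))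
    (h : π.map Prod.fst = r) :
    ∫⁻ p, (‖p.1‖₊ : ℝ≥0∞) ∂π = ∫⁻ w, (‖w‖₊ : ℝ≥0∞) ∂r := by
  rw [← h, lintegral_map (by measurability) measurable_fst]

lemma coupling_lintegral_snd {r' : Measure (Esp dz)} (π : Measure (Esp dz × Esp dz))
    (h : π.map Prod.snd = r') :
    ∫⁻ p, (‖p.2‖₊ : ℝ≥0∞) ∂π = ∫⁻ w, (‖w‖₊ : ℝ≥0∞) ∂r' := by
  rw [← h, lintegral_map (by measurability) measurable_snd]

lemma W1_lt_top (r r' : Measure (Esp dz)) [IsProbabilityMeasure r] [IsProbabilityMeasure r']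
    (hr : (∫⁻ w, (‖w‖₊ : ℝ≥0∞) ∂r) < ⊤) (hr' : (∫⁻ w, (‖w‖₊ : ℝ≥0∞) ∂r') < ⊤) :
    W1 r r' < ⊤ := by
  have hmem : ((r.prod r').map Prod.fst = r ∧ (r.prod r').map Prod.snd = r') := by
    constructor
    · rw [Measure.map_fst_prod]; simp
    · rw [Measure.map_snd_prod]; simp
  have hle : W1 r r' ≤ ∫⁻ p, (‖p.1 - p.2‖₊ : ℝ≥0∞) ∂(r.prod r') := by
    unfold W1
    exact iInf_le (fun π : {π : Measure (Esp dz × Esp dz) //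
      π.map Prod.fst = r ∧ π.map Prod.snd = r'} => ∫⁻ p, (‖p.1 - p.2‖₊ : ℝ≥0∞) ∂π.1)
      ⟨r.prod r', hmem⟩
  refine lt_of_le_of_lt hle ?_
  calc ∫⁻ p, (‖p.1 - p.2‖₊ : ℝ≥0∞) ∂(r.prod r')
      ≤ ∫⁻ p, ((‖p.1‖₊ : ℝ≥0∞) + ‖p.2‖₊) ∂(r.prod r') := by
        refine lintegral_mono fun p => ?_
        calc ((‖p.1 - p.2‖₊ : ℝ≥0∞)) ≤ ((‖p.1‖₊ + ‖p.2‖₊ : ℝ≥0) : ℝ≥0∞) :=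
          ENNReal.coe_le_coe.2 (nnnorm_sub_le _ _)
          _ = (‖p.1‖₊ : ℝ≥0∞) + ‖p.2‖₊ := by push_cast; ring
    _ = (∫⁻ p, (‖p.1‖₊ : ℝ≥0∞) ∂(r.prod r')) + ∫⁻ p, (‖p.2‖₊ : ℝ≥0∞) ∂(r.prod r') :=
        lintegral_add_left (by measurability) _
    _ = (∫⁻ w, (‖w‖₊ : ℝ≥0∞) ∂r) + ∫⁻ w, (‖w‖₊ : ℝ≥0∞) ∂r' := by
        rw [coupling_lintegral_fst _ hmem.1, coupling_lintegral_snd _ hmem.2]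
    _ < ⊤ := ENNReal.add_lt_top.2 ⟨hr, hr'⟩

end Aux

section Aux2
open InnerProductSpace
variable {dθ dx dz : ℕ}

lemma W1_integral_diff_le {F : Type*} [NormedAddCommGroup F] [NormedSpace ℝ F]
    [CompleteSpace F]
    (f : Esp dz → F) (L C : ℝ) (hL : 0 < L) (hf_cont : Continuous f)
    (hf_lip : ∀ z z', ‖f z - f z'‖ ≤ L * ‖z - z'‖)
    (hf_bdd : ∀ z, ‖f z‖ ≤ C)
    (r r' : Measure (Esp dz)) [IsProbabilityMeasure r] [IsProbabilityMeasure r']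
    (hr : (∫⁻ w, (‖w‖₊ : ℝ≥0∞) ∂r) < ⊤) (hr' : (∫⁻ w, (‖w‖₊ : ℝ≥0∞) ∂r') < ⊤) :
    ‖(∫ z, f z ∂r) - ∫ z, f z ∂r'‖ ≤ L * (W1 r r').toReal := by
  have hWfin : W1 r r' < ⊤ := W1_lt_top r r' hr hr'
  refine le_of_forall_pos_le_add fun δ hδ => ?_
  -- pick a near-optimal coupling
  have hlt : W1 r r' < W1 r r' + ENNReal.ofReal (δ / L) :=
    ENNReal.lt_add_right hWfin.ne (by positivity)
  obtain ⟨⟨π, hπ1, hπ2⟩, hπlt⟩ := iInf_lt_iff.1 (lt_of_eq_of_lt rfl hlt : W1 r r' < _)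
  haveI : IsProbabilityMeasure π := by
    refine ⟨?_⟩
    rw [← measure_univ (μ := r), ← hπ1,
      Measure.map_apply measurable_fst MeasurableSet.univ, Set.preimage_univ]
  have hS : (∫⁻ p, (‖p.1 - p.2‖₊ : ℝ≥0∞) ∂π) < W1 r r' + ENNReal.ofReal (δ / L) := hπlt
  -- rewrite integrals via the coupling
  have h1 : ∫ z, f z ∂r = ∫ p, f p.1 ∂π := by
    rw [← hπ1, integral_map measurable_fst.aemeasurable hf_cont.aestronglyMeasurable]
  have h2 : ∫ z, f z ∂r' = ∫ p, f p.2 ∂π := by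
    rw [← hπ2, integral_map measurable_snd.aemeasurable hf_cont.aestronglyMeasurable]
  have hint1 : Integrable (fun p : Esp dz × Esp dz => f p.1) π :=
    (integrable_const C).mono' (hf_cont.comp continuous_fst).aestronglyMeasurable
      (Eventually.of_forall fun p => hf_bdd _)
  have hint2 : Integrable (fun p : Esp dz × Esp dz => f p.2) π :=
    (integrable_const C).mono' (hf_cont.comp continuous_snd).aestronglyMeasurable
      (Eventually.of_forall fun p => hf_bdd _)
  rw [h1, h2, ← integral_sub hint1 hint2]
  have hb := norm_integral_le_lintegral_norm (μ := π) (fun p : Esp dz × Esp dz => f p.1 - f p.2)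
  refine hb.trans ?_
  have hle : (∫⁻ p, ENNReal.ofReal ‖f p.1 - f p.2‖ ∂π)
      ≤ ENNReal.ofReal L * ∫⁻ p, (‖p.1 - p.2‖₊ : ℝ≥0∞) ∂π := by
    rw [← lintegral_const_mul' _ _ ENNReal.ofReal_ne_top]
    refine lintegral_mono fun p => ?_
    calc ENNReal.ofReal ‖f p.1 - f p.2‖ ≤ ENNReal.ofReal (L * ‖p.1 - p.2‖) :=
          ENNReal.ofReal_le_ofReal (hf_lip _ _)
      _ = ENNReal.ofReal L * ENNReal.ofReal ‖p.1 - p.2‖ := ENNReal.ofReal_mul hL.le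
      _ = ENNReal.ofReal L * (‖p.1 - p.2‖₊ : ℝ≥0∞) := by congr 1; exact ENNReal.ofReal_eq_coe_nnreal (norm_nonneg _)
  have hRfin : ENNReal.ofReal L * (W1 r r' + ENNReal.ofReal (δ / L)) ≠ ⊤ := by
    refine ENNReal.mul_ne_top ENNReal.ofReal_ne_top ?_
    exact ENNReal.add_ne_top.2 ⟨hWfin.ne, ENNReal.ofReal_ne_top⟩
  calc (∫⁻ p, ENNReal.ofReal ‖f p.1 - f p.2‖ ∂π).toReal
      ≤ (ENNReal.ofReal L * (W1 r r' + ENNReal.ofReal (δ / L))).toReal := by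
        refine ENNReal.toReal_mono hRfin (hle.trans ?_)
        exact mul_le_mul' le_rfl hS.le
    _ = L * ((W1 r r').toReal + δ / L) := by
        rw [ENNReal.toReal_mul, ENNReal.toReal_add hWfin.ne ENNReal.ofReal_ne_top,
          ENNReal.toReal_ofReal hL.le, ENNReal.toReal_ofReal (by positivity)]
    _ = L * (W1 r r').toReal + δ := by
        field_simp
end Aux2
section Aux3
open InnerProductSpace
variable {dθ dx dz : ℕ} {k : Esp dθ → Esp dx → Esp dz → ℝ}

/-- the linear embedding `y ↦ (0, y, 0)` -/
noncomputable def Jx (dθ dx dz : ℕ) : Esp dx →L[ℝ] Esp dθ × Esp dx × Esp dz :=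
  (0 : Esp dx →L[ℝ] Esp dθ).prod ((ContinuousLinearMap.id ℝ (Esp dx)).prod 0)

lemma Jx_norm_le : ‖Jx dθ dx dz‖ ≤ 1 := by
  refine ContinuousLinearMap.opNorm_le_bound _ zero_le_one fun y => ?_
  simp [Jx, Prod.norm_def, ContinuousLinearMap.prod_apply]

lemma hasFDerivAt_emb (θ : Esp dθ) (z : Esp dz) (x : Esp dx) :
    HasFDerivAt (fun y : Esp dx => ((θ, y, z) : Esp dθ × Esp dx × Esp dz)) (Jx dθ dx dz) x :=
  (hasFDerivAt_const θ x).prodMk ((hasFDerivAt_id x).prodMk (hasFDerivAt_const z x))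

lemma hasFDerivAt_k_x
    (hk_diff : Differentiable ℝ (fun p : Esp dθ × Esp dx × Esp dz => k p.1 p.2.1 p.2.2))
    (θ : Esp dθ) (z : Esp dz) (x : Esp dx) :
    HasFDerivAt (fun y => k θ y z)
      ((fderiv ℝ (fun p : Esp dθ × Esp dx × Esp dz => k p.1 p.2.1 p.2.2) (θ, x, z)).comp
        (Jx dθ dx dz)) x :=
  by exact ((hk_diff (θ, x, z)).hasFDerivAt.comp x (hasFDerivAt_emb θ z x))

lemma norm_fderiv_k_x_le {Bk : ℝ}
    (hk_nonneg : ∀ θ x z, 0 ≤ k θ x z)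
    (hk_diff : Differentiable ℝ (fun p : Esp dθ × Esp dx × Esp dz => k p.1 p.2.1 p.2.2))
    (hk_bdd : ∀ (θ : Esp dθ) (x : Esp dx) (z : Esp dz),
      k θ x z + ‖fderiv ℝ (fun p : Esp dθ × Esp dx × Esp dz => k p.1 p.2.1 p.2.2) (θ, x, z)‖ ≤ Bk)
    (θ : Esp dθ) (z : Esp dz) (x : Esp dx) :
    ‖fderiv ℝ (fun y => k θ y z) x‖ ≤ Bk := by
  rw [(hasFDerivAt_k_x hk_diff θ z x).fderiv]
  calc ‖_‖ ≤ ‖fderiv ℝ (fun p : Esp dθ × Esp dx × Esp dz => k p.1 p.2.1 p.2.2) (θ, x, z)‖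
        * ‖Jx dθ dx dz‖ := ContinuousLinearMap.opNorm_comp_le _ _
    _ ≤ Bk * 1 := by
        refine mul_le_mul ?_ Jx_norm_le (norm_nonneg _) ?_
        · have := hk_bdd θ x z
          have := hk_nonneg θ x z
          linarith
        · have h0 := hk_nonneg θ x z
          have h1 := norm_nonneg (fderiv ℝ (fun p : Esp dθ × Esp dx × Esp dz => k p.1 p.2.1 p.2.2) (θ, x, z))
          have := hk_bdd θ x z
          linarith
    _ = Bk := mul_one _

lemma k_lip {Bk : ℝ}
    (hk_nonneg : ∀ θ x z, 0 ≤ k θ x z)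
    (hk_diff : Differentiable ℝ (fun p : Esp dθ × Esp dx × Esp dz => k p.1 p.2.1 p.2.2))
    (hk_bdd : ∀ (θ : Esp dθ) (x : Esp dx) (z : Esp dz),
      k θ x z + ‖fderiv ℝ (fun p : Esp dθ × Esp dx × Esp dz => k p.1 p.2.1 p.2.2) (θ, x, z)‖ ≤ Bk)
    (θ θ' : Esp dθ) (x x' : Esp dx) (z z' : Esp dz) :
    ‖k θ x z - k θ' x' z'‖ ≤
      Bk * ‖((θ, x, z) : Esp dθ × Esp dx × Esp dz) - (θ', x', z')‖ := by
  have := Convex.norm_image_sub_le_of_norm_fderiv_le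
    (f := fun p : Esp dθ × Esp dx × Esp dz => k p.1 p.2.1 p.2.2) (C := Bk) (s := Set.univ)
    (fun p _ => hk_diff p)
    (fun p _ => by
      have := hk_bdd p.1 p.2.1 p.2.2
      have := hk_nonneg p.1 p.2.1 p.2.2
      calc ‖fderiv ℝ (fun p : Esp dθ × Esp dx × Esp dz => k p.1 p.2.1 p.2.2) p‖
          = ‖fderiv ℝ (fun p : Esp dθ × Esp dx × Esp dz => k p.1 p.2.1 p.2.2) (p.1, p.2.1, p.2.2)‖ := by
            simp
        _ ≤ Bk := by linarith)
    convex_univ (Set.mem_univ ((θ', x', z') : Esp dθ × Esp dx × Esp dz))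
    (Set.mem_univ ((θ, x, z) : Esp dθ × Esp dx × Esp dz))
  simpa using this

lemma fderiv_k_x_lip {Kk : ℝ}
    (hk_gradlip : ∀ (θ θ' : Esp dθ) (x x' : Esp dx) (z z' : Esp dz),
      ‖gradient (fun y => k θ y z) x - gradient (fun y => k θ' y z') x'‖ ≤
        Kk * ‖((θ, x, z) : Esp dθ × Esp dx × Esp dz) - (θ', x', z')‖)
    (θ θ' : Esp dθ) (x x' : Esp dx) (z z' : Esp dz) :
    ‖fderiv ℝ (fun y => k θ y z) x - fderiv ℝ (fun y => k θ' y z') x'‖ ≤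
      Kk * ‖((θ, x, z) : Esp dθ × Esp dx × Esp dz) - (θ', x', z')‖ := by
  have h := hk_gradlip θ θ' x x' z z'
  have heq : gradient (fun y => k θ y z) x - gradient (fun y => k θ' y z') x'
      = (toDual ℝ (Esp dx)).symm
          (fderiv ℝ (fun y => k θ y z) x - fderiv ℝ (fun y => k θ' y z') x') := by
    rw [map_sub]; rfl
  rwa [heq, LinearIsometryEquiv.norm_map] at h
end Aux3
section Aux4
open InnerProductSpace
variable {dθ dx dz : ℕ} {k : Esp dθ → Esp dx → Esp dz → ℝ} {Bk Kk : ℝ}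

noncomputable def gkx (k : Esp dθ → Esp dx → Esp dz → ℝ) (θ : Esp dθ) (x : Esp dx)
    (z : Esp dz) : Esp dx →L[ℝ] ℝ :=
  fderiv ℝ (fun y => k θ y z) x

noncomputable def Vq (k : Esp dθ → Esp dx → Esp dz → ℝ) (θ : Esp dθ)
    (r : Measure (Esp dz)) (x : Esp dx) : Esp dx →L[ℝ] ℝ :=
  ∫ z, gkx k θ x z ∂r

variable
  (hk_nonneg : ∀ θ x z, 0 ≤ k θ x z)
  (hk_diff : Differentiable ℝ (fun p : Esp dθ × Esp dx × Esp dz => k p.1 p.2.1 p.2.2))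
  (hk_bdd : ∀ (θ : Esp dθ) (x : Esp dx) (z : Esp dz),
      k θ x z + ‖fderiv ℝ (fun p : Esp dθ × Esp dx × Esp dz => k p.1 p.2.1 p.2.2) (θ, x, z)‖ ≤ Bk)
  (hk_gradlip : ∀ (θ θ' : Esp dθ) (x x' : Esp dx) (z z' : Esp dz),
      ‖gradient (fun y => k θ y z) x - gradient (fun y => k θ' y z') x'‖ ≤
        Kk * ‖((θ, x, z) : Esp dθ × Esp dx × Esp dz) - (θ', x', z')‖)

section
include hk_diff

lemma k_cont_z (θ : Esp dθ) (x : Esp dx) : Continuous (fun z => k θ x z) :=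
  show Continuous ((fun p : Esp dθ × Esp dx × Esp dz => k p.1 p.2.1 p.2.2) ∘
      fun z => (θ, x, z)) from
    hk_diff.continuous.comp (continuous_const.prodMk (continuous_const.prodMk continuous_id))

include hk_nonneg hk_bdd

lemma k_le_Bk (θ : Esp dθ) (x : Esp dx) (z : Esp dz) : ‖k θ x z‖ ≤ Bk := by
  rw [Real.norm_eq_abs, abs_of_nonneg (hk_nonneg θ x z)]
  have := hk_bdd θ x z
  have := norm_nonneg (fderiv ℝ (fun p : Esp dθ × Esp dx × Esp dz => k p.1 p.2.1 p.2.2) (θ, x, z))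
  linarith

lemma k_integrable (θ : Esp dθ) (x : Esp dx) (r : Measure (Esp dz)) [IsProbabilityMeasure r] :
    Integrable (fun z => k θ x z) r :=
  (integrable_const Bk).mono' (k_cont_z hk_diff θ x).aestronglyMeasurable
    (Eventually.of_forall fun z => k_le_Bk hk_nonneg hk_diff hk_bdd θ x z)

end

section
include hk_gradlip

lemma gkx_lip (hKk : 0 < Kk) (θ : Esp dθ) (x : Esp dx) :
    LipschitzWith Kk.toNNReal (fun z => gkx k θ x z) := by
  refine LipschitzWith.of_dist_le_mul fun z z' => ?_
  rw [dist_eq_norm, dist_eq_norm, Real.coe_toNNReal _ hKk.le]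
  have := fderiv_k_x_lip hk_gradlip θ θ x x z z'
  rwa [prod3_norm_same_θx] at this

lemma gkx_cont (hKk : 0 < Kk) (θ : Esp dθ) (x : Esp dx) :
    Continuous (fun z => gkx k θ x z) :=
  (gkx_lip hk_gradlip hKk θ x).continuous

end

include hk_nonneg hk_diff hk_bdd hk_gradlip in
lemma gkx_integrable (hKk : 0 < Kk) (θ : Esp dθ) (x : Esp dx)
    (r : Measure (Esp dz)) [IsProbabilityMeasure r] :
    Integrable (fun z => gkx k θ x z) r :=
  (integrable_const Bk).mono' (gkx_cont hk_gradlip hKk θ x).aestronglyMeasurable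
    (Eventually.of_forall fun z => norm_fderiv_k_x_le hk_nonneg hk_diff hk_bdd θ z x)

include hk_nonneg hk_diff hk_bdd hk_gradlip in
lemma hasFDerivAt_qdens (hKk : 0 < Kk) (θ : Esp dθ) (x : Esp dx)
    (r : Measure (Esp dz)) [IsProbabilityMeasure r] :
    HasFDerivAt (fun y => qdens k θ r y) (Vq k θ r x) x := by
  unfold qdens Vq
  refine hasFDerivAt_integral_of_dominated_of_fderiv_le (s := Metric.ball x 1) (Metric.ball_mem_nhds x one_pos)
    (Eventually.of_forall fun y => (k_cont_z hk_diff θ y).aestronglyMeasurable)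
    (k_integrable hk_nonneg hk_diff hk_bdd θ x r)
    ((gkx_cont hk_gradlip hKk θ x).aestronglyMeasurable)
    (Eventually.of_forall fun z => fun y _ => norm_fderiv_k_x_le hk_nonneg hk_diff hk_bdd θ z y)
    (integrable_const Bk)
    (Eventually.of_forall fun z => fun y _ =>
      (hasFDerivAt_k_x hk_diff θ z y).differentiableAt.hasFDerivAt)

include hk_nonneg in
lemma qdens_nonneg (θ : Esp dθ) (x : Esp dx) (r : Measure (Esp dz)) :
    0 ≤ qdens k θ r x :=
  integral_nonneg fun z => hk_nonneg θ x z

include hk_nonneg hk_diff hk_bdd hk_gradlip in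
lemma sGamma_eq {γ : ℝ} (hγ : 0 < γ) (hKk : 0 < Kk)
    (φ : Esp dθ → Esp dz → Esp dx → Esp dx)
    (θ : Esp dθ) (r : Measure (Esp dz)) [IsProbabilityMeasure r] (z : Esp dz) (ε : Esp dx) :
    sGamma γ k φ θ r z ε
      = (qdens k θ r (φ θ z ε) + γ)⁻¹ •
          (toDual ℝ (Esp dx)).symm (Vq k θ r (φ θ z ε)) := by
  set x := φ θ z ε
  have hq0 : 0 ≤ qdens k θ r x := qdens_nonneg hk_nonneg θ x r
  have hne : qdens k θ r x + γ ≠ 0 := by positivity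
  have hD : HasFDerivAt (fun y => Real.log (qdens k θ r y + γ))
      ((qdens k θ r x + γ)⁻¹ • Vq k θ r x) x := by
    have h1 : HasFDerivAt (fun y => qdens k θ r y + γ) (Vq k θ r x) x :=
      (hasFDerivAt_qdens hk_nonneg hk_diff hk_bdd hk_gradlip hKk θ x r).add_const γ
    simpa using h1.log hne
  refine HasGradientAt.gradient ?_
  rw [hasGradientAt_iff_hasFDerivAt]
  have heq : (toDual ℝ (Esp dx)) ((qdens k θ r x + γ)⁻¹ •
      (toDual ℝ (Esp dx)).symm (Vq k θ r x)) = (qdens k θ r x + γ)⁻¹ • Vq k θ r x := by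
    simp
  rw [heq]
  exact hD

end Aux4
section Aux5
open InnerProductSpace
variable {dθ dx dz : ℕ} {k : Esp dθ → Esp dx → Esp dz → ℝ} {Bk Kk : ℝ}
variable
  (hk_nonneg : ∀ θ x z, 0 ≤ k θ x z)
  (hk_diff : Differentiable ℝ (fun p : Esp dθ × Esp dx × Esp dz => k p.1 p.2.1 p.2.2))
  (hk_bdd : ∀ (θ : Esp dθ) (x : Esp dx) (z : Esp dz),
      k θ x z + ‖fderiv ℝ (fun p : Esp dθ × Esp dx × Esp dz => k p.1 p.2.1 p.2.2) (θ, x, z)‖ ≤ Bk)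
  (hk_gradlip : ∀ (θ θ' : Esp dθ) (x x' : Esp dx) (z z' : Esp dz),
      ‖gradient (fun y => k θ y z) x - gradient (fun y => k θ' y z') x'‖ ≤
        Kk * ‖((θ, x, z) : Esp dθ × Esp dx × Esp dz) - (θ', x', z')‖)

set_option linter.unusedSectionVars false

include hk_nonneg hk_diff hk_bdd in
lemma norm_Vq_le (θ : Esp dθ) (x : Esp dx) (r : Measure (Esp dz)) [IsProbabilityMeasure r] :
    ‖Vq k θ r x‖ ≤ Bk := by
  have h := norm_integral_le_of_norm_le_const (μ := r) (C := Bk)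
    (f := fun z => gkx k θ x z)
    (Eventually.of_forall fun z => norm_fderiv_k_x_le hk_nonneg hk_diff hk_bdd θ z x)
  simpa [Vq, measure_univ] using h

include hk_nonneg hk_diff hk_bdd hk_gradlip in
lemma qdens_diff_param (hKk : 0 < Kk) (θ θ' : Esp dθ) (x x' : Esp dx)
    (r : Measure (Esp dz)) [IsProbabilityMeasure r] :
    |qdens k θ r x - qdens k θ' r x'| ≤
      Bk * ‖((θ, x) : Esp dθ × Esp dx) - (θ', x')‖ := by
  rw [show qdens k θ r x - qdens k θ' r x' = ∫ z, (k θ x z - k θ' x' z) ∂r from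
    (integral_sub (k_integrable hk_nonneg hk_diff hk_bdd θ x r)
      (k_integrable hk_nonneg hk_diff hk_bdd θ' x' r)).symm]
  have h := norm_integral_le_of_norm_le_const (μ := r)
    (C := Bk * ‖((θ, x) : Esp dθ × Esp dx) - (θ', x')‖)
    (f := fun z => k θ x z - k θ' x' z)
    (Eventually.of_forall fun z => by
      have := k_lip hk_nonneg hk_diff hk_bdd θ θ' x x' z z
      rwa [prod3_norm_same_z] at this)
  simpa [measure_univ] using h

include hk_nonneg hk_diff hk_bdd hk_gradlip in
lemma Vq_diff_param (hKk : 0 < Kk) (θ θ' : Esp dθ) (x x' : Esp dx)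
    (r : Measure (Esp dz)) [IsProbabilityMeasure r] :
    ‖Vq k θ r x - Vq k θ' r x'‖ ≤
      Kk * ‖((θ, x) : Esp dθ × Esp dx) - (θ', x')‖ := by
  rw [show Vq k θ r x - Vq k θ' r x' = ∫ z, (gkx k θ x z - gkx k θ' x' z) ∂r from
    (integral_sub (gkx_integrable hk_nonneg hk_diff hk_bdd hk_gradlip hKk θ x r)
      (gkx_integrable hk_nonneg hk_diff hk_bdd hk_gradlip hKk θ' x' r)).symm]
  have h := norm_integral_le_of_norm_le_const (μ := r)
    (C := Kk * ‖((θ, x) : Esp dθ × Esp dx) - (θ', x')‖)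
    (f := fun z => gkx k θ x z - gkx k θ' x' z)
    (Eventually.of_forall fun z => by
      have := fderiv_k_x_lip hk_gradlip θ θ' x x' z z
      rwa [prod3_norm_same_z] at this)
  simpa [measure_univ] using h

include hk_nonneg hk_diff hk_bdd hk_gradlip in
lemma qdens_diff_meas (hBk : 0 < Bk) (θ : Esp dθ) (x : Esp dx)
    (r r' : Measure (Esp dz)) [IsProbabilityMeasure r] [IsProbabilityMeasure r']
    (hr : (∫⁻ w, (‖w‖₊ : ℝ≥0∞) ∂r) < ⊤) (hr' : (∫⁻ w, (‖w‖₊ : ℝ≥0∞) ∂r') < ⊤) :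
    |qdens k θ r x - qdens k θ r' x| ≤ Bk * (W1 r r').toReal := by
  have h := W1_integral_diff_le (fun z => k θ x z) Bk Bk hBk (k_cont_z hk_diff θ x)
    (fun z z' => by
      have := k_lip hk_nonneg hk_diff hk_bdd θ θ x x z z'
      rwa [prod3_norm_same_θx] at this)
    (fun z => k_le_Bk hk_nonneg hk_diff hk_bdd θ x z) r r' hr hr'
  simpa [qdens] using h

include hk_nonneg hk_diff hk_bdd hk_gradlip in
lemma Vq_diff_meas (hKk : 0 < Kk) (θ : Esp dθ) (x : Esp dx)
    (r r' : Measure (Esp dz)) [IsProbabilityMeasure r] [IsProbabilityMeasure r']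
    (hr : (∫⁻ w, (‖w‖₊ : ℝ≥0∞) ∂r) < ⊤) (hr' : (∫⁻ w, (‖w‖₊ : ℝ≥0∞) ∂r') < ⊤) :
    ‖Vq k θ r x - Vq k θ r' x‖ ≤ Kk * (W1 r r').toReal := by
  have h := W1_integral_diff_le (fun z => gkx k θ x z) Kk Bk hKk
    (gkx_cont hk_gradlip hKk θ x)
    (fun z z' => by
      have := fderiv_k_x_lip hk_gradlip θ θ x x z z'
      rwa [prod3_norm_same_θx] at this)
    (fun z => norm_fderiv_k_x_le hk_nonneg hk_diff hk_bdd θ z x) r r' hr hr'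
  simpa [Vq] using h

lemma phi_lip (φ : Esp dθ → Esp dz → Esp dx → Esp dx) {aφ bφ : ℝ}
    (hφ_diff : ∀ ε, Differentiable ℝ (fun p : Esp dθ × Esp dz => φ p.1 p.2 ε))
    (hφ_bdd : ∀ (θ : Esp dθ) (z : Esp dz) (ε : Esp dx),
      ‖fderiv ℝ (fun p : Esp dθ × Esp dz => φ p.1 p.2 ε) (θ, z)‖ ≤ aφ * ‖ε‖ + bφ)
    (θ θ' : Esp dθ) (z z' : Esp dz) (ε : Esp dx) :
    ‖φ θ z ε - φ θ' z' ε‖ ≤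
      (aφ * ‖ε‖ + bφ) * ‖((θ, z) : Esp dθ × Esp dz) - (θ', z')‖ := by
  have h := Convex.norm_image_sub_le_of_norm_fderiv_le
    (f := fun p : Esp dθ × Esp dz => φ p.1 p.2 ε) (C := aφ * ‖ε‖ + bφ) (s := Set.univ)
    (fun p _ => (hφ_diff ε) p)
    (fun p _ => by simpa using hφ_bdd p.1 p.2 ε)
    convex_univ (Set.mem_univ ((θ', z') : Esp dθ × Esp dz))
    (Set.mem_univ ((θ, z) : Esp dθ × Esp dz))
  simpa using h

end Aux5

set_option maxHeartbeats 2000000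

/-- Lipschitz continuity of the `γ`-regularized score: under boundedness and Lipschitz-gradient
regularity of the kernel and a linear-growth bound on `∇_{(θ,z)} φ`, there are `a_s, b_s > 0` with
`‖s^γ_{θ,r}(z,ε) − s^γ_{θ',r'}(z',ε)‖ ≤ (a_s‖ε‖ + b_s)(‖(θ,z) − (θ',z')‖ + W₁(r, r'))`. -/
theorem score_gamma_lipschitz {dθ dx dz : ℕ} (γ : ℝ) (hγ : 0 < γ)
    (Bk Kk : ℝ) (hBk : 0 < Bk) (hKk : 0 < Kk)
    (k : Esp dθ → Esp dx → Esp dz → ℝ)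
    (hk_nonneg : ∀ θ x z, 0 ≤ k θ x z)
    (hk_diff : Differentiable ℝ (fun p : Esp dθ × Esp dx × Esp dz => k p.1 p.2.1 p.2.2))
    (hk_bdd : ∀ (θ : Esp dθ) (x : Esp dx) (z : Esp dz),
      k θ x z + ‖fderiv ℝ (fun p : Esp dθ × Esp dx × Esp dz => k p.1 p.2.1 p.2.2) (θ, x, z)‖ ≤ Bk)
    (hk_gradlip : ∀ (θ θ' : Esp dθ) (x x' : Esp dx) (z z' : Esp dz),
      ‖gradient (fun y => k θ y z) x - gradient (fun y => k θ' y z') x'‖ ≤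
        Kk * ‖((θ, x, z) : Esp dθ × Esp dx × Esp dz) - (θ', x', z')‖)
    (φ : Esp dθ → Esp dz → Esp dx → Esp dx)
    (aφ bφ : ℝ) (haφ : 0 ≤ aφ) (hbφ : 0 < bφ)
    (hφ_diff : ∀ ε, Differentiable ℝ (fun p : Esp dθ × Esp dz => φ p.1 p.2 ε))
    (hφ_bdd : ∀ (θ : Esp dθ) (z : Esp dz) (ε : Esp dx),
      ‖fderiv ℝ (fun p : Esp dθ × Esp dz => φ p.1 p.2 ε) (θ, z)‖ ≤ aφ * ‖ε‖ + bφ) :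
    ∃ as bs : ℝ, 0 < as ∧ 0 < bs ∧
      ∀ (θ θ' : Esp dθ) (z z' : Esp dz) (ε : Esp dx)
        (r r' : Measure (Esp dz)),
        IsProbabilityMeasure r → IsProbabilityMeasure r' →
        (∫⁻ w, (‖w‖₊ : ℝ≥0∞) ∂r) < ⊤ → (∫⁻ w, (‖w‖₊ : ℝ≥0∞) ∂r') < ⊤ →
        ‖sGamma γ k φ θ r z ε - sGamma γ k φ θ' r' z' ε‖ ≤
          (as * ‖ε‖ + bs) * (‖((θ, z) : Esp dθ × Esp dz) - (θ', z')‖ + (W1 r r').toReal) := by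
  set C0 : ℝ := Kk / γ + Bk * Bk / (γ * γ) with hC0
  have hC0pos : 0 < C0 := by positivity
  refine ⟨C0 * (aφ + 1), C0 * (1 + bφ), by positivity, by positivity, ?_⟩
  intro θ θ' z z' ε r r' hrP hrP' hm hm'
  haveI := hrP; haveI := hrP'
  set xφ := φ θ z ε with hxφ
  set xφ' := φ θ' z' ε with hxφ'
  set q1 := qdens k θ r xφ with hq1
  set q2 := qdens k θ' r' xφ' with hq2
  set v1 := Vq k θ r xφ with hv1
  set v2 := Vq k θ' r' xφ' with hv2
  set Wt := (W1 r r').toReal with hWt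
  have hWt0 : 0 ≤ Wt := ENNReal.toReal_nonneg
  set D := ‖((θ, z) : Esp dθ × Esp dz) - (θ', z')‖ with hD
  have hD0 : 0 ≤ D := norm_nonneg _
  set P := ‖((θ, xφ) : Esp dθ × Esp dx) - (θ', xφ')‖ with hP
  have hP0 : 0 ≤ P := norm_nonneg _
  -- difference bounds
  have hVmid : ‖v1 - v2‖ ≤ Kk * (P + Wt) := by
    have h1 : ‖v1 - Vq k θ' r xφ'‖ ≤ Kk * P :=
      Vq_diff_param hk_nonneg hk_diff hk_bdd hk_gradlip hKk θ θ' xφ xφ' r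
    have h2 : ‖Vq k θ' r xφ' - v2‖ ≤ Kk * Wt :=
      Vq_diff_meas hk_nonneg hk_diff hk_bdd hk_gradlip hKk θ' xφ' r r' hm hm'
    calc ‖v1 - v2‖ ≤ ‖v1 - Vq k θ' r xφ'‖ + ‖Vq k θ' r xφ' - v2‖ := norm_sub_le_norm_sub_add_norm_sub _ _ _
      _ ≤ Kk * P + Kk * Wt := add_le_add h1 h2
      _ = Kk * (P + Wt) := by ring
  have hQmid : |q1 - q2| ≤ Bk * (P + Wt) := by
    have h1 : |q1 - qdens k θ' r xφ'| ≤ Bk * P :=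
      qdens_diff_param hk_nonneg hk_diff hk_bdd hk_gradlip hKk θ θ' xφ xφ' r
    have h2 : |qdens k θ' r xφ' - q2| ≤ Bk * Wt :=
      qdens_diff_meas hk_nonneg hk_diff hk_bdd hk_gradlip hBk θ' xφ' r r' hm hm'
    calc |q1 - q2| ≤ |q1 - qdens k θ' r xφ'| + |qdens k θ' r xφ' - q2| :=
          abs_sub_le _ _ _
      _ ≤ Bk * P + Bk * Wt := add_le_add h1 h2
      _ = Bk * (P + Wt) := by ring
  have hv2B : ‖v2‖ ≤ Bk := norm_Vq_le hk_nonneg hk_diff hk_bdd θ' xφ' r'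
  -- positivity facts
  have hq1' : 0 ≤ q1 := qdens_nonneg hk_nonneg θ xφ r
  have hq2' : 0 ≤ q2 := qdens_nonneg hk_nonneg θ' xφ' r'
  have ha1 : γ ≤ q1 + γ := by linarith
  have ha2 : γ ≤ q2 + γ := by linarith
  have ha1p : 0 < q1 + γ := by linarith
  have ha2p : 0 < q2 + γ := by linarith
  -- the key quotient estimate
  have key : ‖sGamma γ k φ θ r z ε - sGamma γ k φ θ' r' z' ε‖ ≤
      γ⁻¹ * ‖v1 - v2‖ + (|q1 - q2| / (γ * γ)) * Bk := by
    rw [sGamma_eq hk_nonneg hk_diff hk_bdd hk_gradlip hγ hKk φ θ r z ε,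
      sGamma_eq hk_nonneg hk_diff hk_bdd hk_gradlip hγ hKk φ θ' r' z' ε]
    set u1 := (InnerProductSpace.toDual ℝ (Esp dx)).symm v1 with hu1
    set u2 := (InnerProductSpace.toDual ℝ (Esp dx)).symm v2 with hu2
    have hu12 : ‖u1 - u2‖ = ‖v1 - v2‖ := by
      rw [hu1, hu2, ← map_sub, LinearIsometryEquiv.norm_map]
    have hu2n : ‖u2‖ = ‖v2‖ := LinearIsometryEquiv.norm_map _ _
    have hsplit : (q1 + γ)⁻¹ • u1 - (q2 + γ)⁻¹ • u2
        = (q1 + γ)⁻¹ • (u1 - u2) + ((q1 + γ)⁻¹ - (q2 + γ)⁻¹) • u2 := by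
      rw [smul_sub, sub_smul]; abel
    calc ‖(q1 + γ)⁻¹ • u1 - (q2 + γ)⁻¹ • u2‖
        ≤ ‖(q1 + γ)⁻¹ • (u1 - u2)‖ + ‖((q1 + γ)⁻¹ - (q2 + γ)⁻¹) • u2‖ := by
          rw [hsplit]; exact norm_add_le _ _
      _ = |(q1 + γ)⁻¹| * ‖u1 - u2‖ + |(q1 + γ)⁻¹ - (q2 + γ)⁻¹| * ‖u2‖ := by
          rw [norm_smul, norm_smul, Real.norm_eq_abs, Real.norm_eq_abs]
      _ ≤ γ⁻¹ * ‖v1 - v2‖ + (|q1 - q2| / (γ * γ)) * Bk := by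
          refine add_le_add ?_ ?_
          · rw [hu12]
            refine mul_le_mul_of_nonneg_right ?_ (norm_nonneg _)
            rw [abs_of_nonneg (by positivity)]
            exact inv_anti₀ hγ ha1
          · have hformula : (q1 + γ)⁻¹ - (q2 + γ)⁻¹ = (q2 - q1) / ((q1 + γ) * (q2 + γ)) := by
              field_simp
              try ring
            have habs : |(q1 + γ)⁻¹ - (q2 + γ)⁻¹| = |q1 - q2| / ((q1 + γ) * (q2 + γ)) := by
              rw [hformula, abs_div, abs_of_pos (mul_pos ha1p ha2p), abs_sub_comm]
            have hquot : |q1 - q2| / ((q1 + γ) * (q2 + γ)) ≤ |q1 - q2| / (γ * γ) := by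
              apply div_le_div_of_nonneg_left (abs_nonneg _) (by positivity)
              exact mul_le_mul ha1 ha2 hγ.le (by linarith)
            rw [habs, hu2n]
            exact mul_le_mul hquot hv2B (norm_nonneg _) (by positivity)
  -- chain everything
  have hstep : ‖sGamma γ k φ θ r z ε - sGamma γ k φ θ' r' z' ε‖ ≤ C0 * (P + Wt) := by
    refine key.trans ?_
    have h1 : γ⁻¹ * ‖v1 - v2‖ ≤ γ⁻¹ * (Kk * (P + Wt)) :=
      mul_le_mul_of_nonneg_left hVmid (by positivity)
    have h2 : (|q1 - q2| / (γ * γ)) * Bk ≤ ((Bk * (P + Wt)) / (γ * γ)) * Bk := by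
      gcongr
    calc γ⁻¹ * ‖v1 - v2‖ + (|q1 - q2| / (γ * γ)) * Bk
        ≤ γ⁻¹ * (Kk * (P + Wt)) + ((Bk * (P + Wt)) / (γ * γ)) * Bk := add_le_add h1 h2
      _ = C0 * (P + Wt) := by rw [hC0]; field_simp
  -- geometric comparison
  set c : ℝ := aφ * ‖ε‖ + bφ with hc
  have hc0 : 0 ≤ c := by positivity
  have hDeq : D = max ‖θ - θ'‖ ‖z - z'‖ := by
    rw [hD, Prod.norm_def]; simp [Prod.mk_sub_mk]
  have hPeq : P = max ‖θ - θ'‖ ‖xφ - xφ'‖ := by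
    rw [hP, Prod.norm_def]; simp [Prod.mk_sub_mk]
  have hθD : ‖θ - θ'‖ ≤ D := hDeq ▸ le_max_left _ _
  have hφd : ‖xφ - xφ'‖ ≤ c * D :=
    phi_lip φ hφ_diff hφ_bdd θ θ' z z' ε
  have hPD : P ≤ (1 + c) * D := by
    rw [hPeq]
    apply max_le
    · nlinarith
    · nlinarith
  have hPWt : P + Wt ≤ (1 + c) * (D + Wt) := by nlinarith
  have hcoef : C0 * (1 + c) ≤ C0 * (aφ + 1) * ‖ε‖ + C0 * (1 + bφ) := by
    have hε : 0 ≤ ‖ε‖ := norm_nonneg _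
    rw [hc]
    nlinarith
  calc ‖sGamma γ k φ θ r z ε - sGamma γ k φ θ' r' z' ε‖
      ≤ C0 * (P + Wt) := hstep
    _ ≤ C0 * ((1 + c) * (D + Wt)) := mul_le_mul_of_nonneg_left hPWt hC0pos.le
    _ = (C0 * (1 + c)) * (D + Wt) := by ring
    _ ≤ (C0 * (aφ + 1) * ‖ε‖ + C0 * (1 + bφ)) * (D + Wt) :=
        mul_le_mul_of_nonneg_right hcoef (by positivity)
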